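/- For ε^{-1} = N+α ∉ ℕ with α ∈ (0,1) and any fixed x with 0 < |x| < 1, the quantity |V̄^ε(x)| = |(Γ(α)Γ(1-α)/(εΓ(ε^{-1})))·Σ_{k=N}^∞ (Γ(k+a)/Γ(k+1-ε^{-1}))x^k| tends to infinity as α → 0⁺ and as α → 1⁻ (with N and a > -2 fixed), because Γ(α)Γ(1-α) = π/sin(πα) → ∞ while the remaining factor stays bounded away from 0. -/

import Mathlib

open Filter Topology MeasureTheory

lemma fact_le_pow_mul (n d : ℕ) : Nat.factorial (n + d) ≤ Nat.factorial n * (n + d) ^ d := by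
  induction d with
  | zero => simp
  | succ d ih =>
    have h1 : Nat.factorial (n + (d + 1)) = (n + d + 1) * Nat.factorial (n + d) := by
      rw [← Nat.add_assoc]; exact Nat.factorial_succ _
    calc Nat.factorial (n + (d + 1)) = (n + d + 1) * Nat.factorial (n + d) := h1
      _ ≤ (n + d + 1) * (Nat.factorial n * (n + d) ^ d) := Nat.mul_le_mul_left _ ih
      _ ≤ Nat.factorial n * (n + (d + 1)) ^ (d + 1) := by
          rw [pow_succ]
          have h2 : (n + d) ^ d ≤ (n + (d+1)) ^ d := Nat.pow_le_pow_left (by omega) d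
          calc (n + d + 1) * (Nat.factorial n * (n + d) ^ d)
              = Nat.factorial n * ((n + d) ^ d * (n + d + 1)) := by ring
            _ ≤ Nat.factorial n * ((n + (d+1)) ^ d * (n + (d+1))) :=
                Nat.mul_le_mul_left _ (Nat.mul_le_mul h2 (by omega))

lemma gamma_lb {t : ℝ} (ht : 0 < t) : (6 : ℝ)⁻¹ ≤ Real.Gamma t := by
  have hmono := Real.Gamma_strictMonoOn_Ici.monotoneOn
  rcases le_or_gt 2 t with h | h
  · have h1 : Real.Gamma 2 ≤ Real.Gamma t :=
      hmono (by norm_num : (2:ℝ) ∈ Set.Ici 2) h h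
    rw [Real.Gamma_two] at h1; linarith
  · have e1 : Real.Gamma (t + 1 + 1) = (t + 1) * Real.Gamma (t + 1) :=
      Real.Gamma_add_one (by linarith)
    have e2 : Real.Gamma (t + 1) = t * Real.Gamma t := Real.Gamma_add_one (ne_of_gt ht)
    have h1 : Real.Gamma 2 ≤ Real.Gamma (t + 1 + 1) :=
      hmono (by norm_num : (2:ℝ) ∈ Set.Ici 2) (by simp [Set.mem_Ici]; linarith) (by linarith)
    rw [Real.Gamma_two] at h1
    have hpos : 0 < Real.Gamma t := Real.Gamma_pos_of_pos ht
    have key : 1 ≤ (t + 1) * (t * Real.Gamma t) := by rw [← e2, ← e1]; exact h1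
    nlinarith [key, hpos, mul_pos ht hpos]

lemma gamma_cont {s : ℝ} (hs : 0 < s) : ContinuousAt Real.Gamma s := by
  refine (Real.differentiableAt_Gamma fun m => ?_).continuousAt
  have : (0:ℝ) ≤ m := Nat.cast_nonneg m
  intro h; rw [h] at hs; linarith

lemma gamma_top : Tendsto Real.Gamma (𝓝[>] (0:ℝ)) atTop := by
  refine tendsto_atTop_mono' (𝓝[>] (0:ℝ)) ?_
    (Tendsto.const_mul_atTop (show (0:ℝ) < 6⁻¹ by norm_num) tendsto_inv_nhdsGT_zero)
  filter_upwards [self_mem_nhdsWithin] with s hs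
  have hs : (0:ℝ) < s := hs
  have h1 : (6:ℝ)⁻¹ ≤ Real.Gamma (s + 1) := gamma_lb (by linarith)
  rw [Real.Gamma_add_one (ne_of_gt hs)] at h1
  calc (6:ℝ)⁻¹ * s⁻¹ ≤ (s * Real.Gamma s) * s⁻¹ :=
        mul_le_mul_of_nonneg_right h1 (inv_nonneg.mpr hs.le)
    _ = Real.Gamma s := by field_simp

lemma summable_shift (M p : ℕ) {y : ℝ} (h0 : y ≠ 0) (hy : |y| < 1) :
    Summable (fun j : ℕ => ((j:ℝ) + M) ^ p * |y| ^ j) := by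
  have hs := summable_pow_mul_geometric_of_norm_lt_one (R := ℝ) p
    (by rwa [Real.norm_eq_abs, abs_abs] : ‖|y|‖ < 1)
  have h2 := (summable_nat_add_iff M).mpr hs
  have h3 := h2.mul_right ((|y| ^ M)⁻¹)
  apply h3.congr
  intro j
  have hy0 : |y| ≠ 0 := abs_ne_zero.mpr h0
  push_cast
  rw [pow_add]
  field_simp

lemma summable_main (c : ℝ) {y : ℝ} (h0 : y ≠ 0) (hy : |y| < 1) :
    Summable (fun j : ℕ => Real.Gamma ((j:ℝ) + c) / (Nat.factorial j : ℝ) * y ^ j) := by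
  set q : ℕ := ⌈|c|⌉₊ with hq
  set M : ℕ := q + 2 with hM
  have hcM : |c| ≤ (M : ℝ) := by
    have h := Nat.le_ceil |c|
    have : ((q:ℝ)) ≤ (M:ℝ) := by rw [hM]; push_cast; linarith
    exact h.trans this
  apply Summable.of_norm_bounded_eventually_nat (g := fun j => ((j:ℝ) + M) ^ M * |y| ^ j)
    (summable_shift M M h0 hy)
  filter_upwards [eventually_ge_atTop M] with j hj
  have hjM : (M:ℝ) ≤ (j:ℝ) := Nat.cast_le.mpr hj
  have hjc2 : (2:ℝ) ≤ (j:ℝ) + c := by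
    have h2 : -|c| ≤ c := neg_abs_le c
    have h3 : (|c|:ℝ) + 2 ≤ (M:ℝ) := by
      rw [hM]; push_cast; linarith [Nat.le_ceil |c|]
    linarith
  have hpos : 0 < Real.Gamma ((j:ℝ) + c) := Real.Gamma_pos_of_pos (by linarith)
  have hle : Real.Gamma ((j:ℝ) + c) ≤ Real.Gamma ((j:ℝ) + M) := by
    have h1 : c ≤ (M:ℝ) := (le_abs_self c).trans hcM
    exact Real.Gamma_strictMonoOn_Ici.monotoneOn (Set.mem_Ici.mpr hjc2)
      (Set.mem_Ici.mpr (by linarith)) (by linarith)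
  have hfact : Real.Gamma ((j:ℝ) + M) = (Nat.factorial (j + (q+1)) : ℝ) := by
    have h4 : ((j:ℝ) + M) = ((j + (q+1) : ℕ) : ℝ) + 1 := by rw [hM]; push_cast; ring
    rw [h4, Real.Gamma_nat_eq_factorial]
  have hnat : Nat.factorial (j + (q+1)) ≤ Nat.factorial j * (j + M) ^ M := by
    calc Nat.factorial (j + (q+1)) ≤ Nat.factorial j * (j + (q+1)) ^ (q+1) :=
          fact_le_pow_mul j (q+1)
      _ ≤ Nat.factorial j * (j + M) ^ M := by
          apply Nat.mul_le_mul_left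
          calc (j + (q+1)) ^ (q+1) ≤ (j + M) ^ (q+1) :=
                Nat.pow_le_pow_left (by omega) _
            _ ≤ (j + M) ^ M := Nat.pow_le_pow_right (by omega) (by omega)
  have hratio : Real.Gamma ((j:ℝ) + c) / (Nat.factorial j : ℝ) ≤ ((j:ℝ) + M) ^ M := by
    rw [div_le_iff₀ (by positivity : (0:ℝ) < (Nat.factorial j : ℝ))]
    calc Real.Gamma ((j:ℝ) + c) ≤ Real.Gamma ((j:ℝ) + M) := hle
      _ = (Nat.factorial (j + (q+1)) : ℝ) := hfact
      _ ≤ (Nat.factorial j : ℝ) * ((j:ℝ) + M) ^ M := by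
          have h5 : ((Nat.factorial (j + (q+1)) : ℕ) : ℝ) ≤
              ((Nat.factorial j * (j + M) ^ M : ℕ) : ℝ) := Nat.cast_le.mpr hnat
          push_cast [hM] at h5 ⊢
          linarith
      _ = ((j:ℝ) + M) ^ M * (Nat.factorial j : ℝ) := by ring
  rw [Real.norm_eq_abs, abs_mul, abs_pow, abs_div, abs_of_pos hpos,
    abs_of_pos (by positivity : (0:ℝ) < (Nat.factorial j : ℝ))]
  exact mul_le_mul_of_nonneg_right hratio (by positivity)

lemma hasSum_pos_c {c y : ℝ} (hc : 0 < c) (h0 : y ≠ 0) (hy : |y| < 1) :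
    HasSum (fun j : ℕ => Real.Gamma ((j:ℝ) + c) / (Nat.factorial j : ℝ) * y ^ j)
      ((1 / (1 - y)) ^ c * Real.Gamma c) := by
  have hy1 : y < 1 := lt_of_le_of_lt (le_abs_self y) hy
  have h1y : 0 < 1 - y := by linarith
  set F : ℕ → ℝ → ℝ := fun j t =>
    y ^ j / (Nat.factorial j : ℝ) * (Real.exp (-t) * t ^ ((j:ℝ) + c - 1)) with hF
  have hInt : ∀ j, Integrable (F j) (volume.restrict (Set.Ioi (0:ℝ))) := fun j =>
    (Real.GammaIntegral_convergent (by positivity : (0:ℝ) < (j:ℝ) + c)).const_mul _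
  have hval : ∀ j, (∫ t, F j t ∂(volume.restrict (Set.Ioi (0:ℝ))))
      = Real.Gamma ((j:ℝ) + c) / (Nat.factorial j : ℝ) * y ^ j := by
    intro j
    simp only [hF]
    rw [integral_const_mul, ← Real.Gamma_eq_integral (by positivity : (0:ℝ) < (j:ℝ) + c)]
    ring
  have hnormval : ∀ j, (∫ t, ‖F j t‖ ∂(volume.restrict (Set.Ioi (0:ℝ))))
      = Real.Gamma ((j:ℝ) + c) / (Nat.factorial j : ℝ) * |y| ^ j := by
    intro j
    have heq : Set.EqOn (fun t => ‖F j t‖)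
        (fun t => |y| ^ j / (Nat.factorial j : ℝ) * (Real.exp (-t) * t ^ ((j:ℝ) + c - 1)))
        (Set.Ioi (0:ℝ)) := by
      intro t ht
      have ht : (0:ℝ) < t := ht
      simp only [hF, Real.norm_eq_abs, abs_mul, abs_div, abs_pow, Nat.abs_cast]
      rw [abs_of_pos (Real.exp_pos _), abs_of_pos (Real.rpow_pos_of_pos ht _)]
    rw [setIntegral_congr_fun measurableSet_Ioi heq, integral_const_mul,
      ← Real.Gamma_eq_integral (by positivity : (0:ℝ) < (j:ℝ) + c)]
    ring
  have hnorm : Summable (fun j => ∫ t, ‖F j t‖ ∂(volume.restrict (Set.Ioi (0:ℝ)))) := by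
    apply Summable.congr (summable_main c (y := |y|) (abs_ne_zero.mpr h0)
      (by rwa [abs_abs]))
    intro j; exact (hnormval j).symm
  have hkey := hasSum_integral_of_summable_integral_norm hInt hnorm
  simp only [hval] at hkey
  have hRHS : (∫ t in Set.Ioi (0:ℝ), ∑' j, F j t) = (1 / (1 - y)) ^ c * Real.Gamma c := by
    have h1 : Set.EqOn (fun t => ∑' j, F j t)
        (fun t => t ^ (c - 1) * Real.exp (-((1 - y) * t))) (Set.Ioi (0:ℝ)) := by
      intro t ht
      have ht : (0:ℝ) < t := ht
      have hFt : ∀ j : ℕ, F j t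
          = (Real.exp (-t) * t ^ (c - 1)) * ((y * t) ^ j / (Nat.factorial j : ℝ)) := by
        intro j
        simp only [hF]
        have hr : t ^ ((j:ℝ) + c - 1) = t ^ (c - 1) * t ^ j := by
          rw [show (j:ℝ) + c - 1 = (c - 1) + (j:ℕ) by push_cast; ring,
            Real.rpow_add ht, Real.rpow_natCast]
        rw [hr, mul_pow]
        ring
      show (∑' j, F j t) = _
      rw [tsum_congr hFt, tsum_mul_left]
      have hexp : (∑' j : ℕ, (y * t) ^ j / (Nat.factorial j : ℝ)) = Real.exp (y * t) := by
        rw [Real.exp_eq_exp_ℝ, NormedSpace.exp_eq_tsum_div]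
      rw [hexp, show Real.exp (-t) * t ^ (c - 1) * Real.exp (y * t)
          = t ^ (c - 1) * (Real.exp (-t) * Real.exp (y * t)) from by ring,
        ← Real.exp_add, show -t + y * t = -((1 - y) * t) from by ring]
    rw [setIntegral_congr_fun measurableSet_Ioi h1,
      Real.integral_rpow_mul_exp_neg_mul_Ioi hc h1y]
  rw [hRHS] at hkey
  exact hkey

lemma hasSum_ne_zero {c y : ℝ} (hc : -1 < c) (h0 : y ≠ 0) (hy : |y| < 1) :
    ∃ S : ℝ, HasSum (fun j : ℕ => Real.Gamma ((j:ℝ) + c) / (Nat.factorial j : ℝ) * y ^ j) S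
      ∧ S ≠ 0 := by
  have hy1 : y < 1 := lt_of_le_of_lt (le_abs_self y) hy
  have h1y : 0 < 1 - y := by linarith
  rcases lt_trichotomy c 0 with hneg | hzero | hpos
  · -- -1 < c < 0 : use shift identity from c + 1
    have hc1 : 0 < c + 1 := by linarith
    set T : ℝ := (1 / (1 - y)) ^ (c + 1) * Real.Gamma (c + 1) with hT
    have hB : HasSum (fun j : ℕ => Real.Gamma ((j:ℝ) + (c + 1)) / (Nat.factorial j : ℝ) * y ^ j)
        T := hasSum_pos_c hc1 h0 hy
    have hTne : T ≠ 0 := by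
      have := Real.rpow_pos_of_pos (by positivity : (0:ℝ) < 1 / (1 - y)) (c + 1)
      have := Real.Gamma_pos_of_pos hc1
      positivity
    set C : ℕ → ℝ := fun j => (j : ℝ) * (Real.Gamma ((j:ℝ) + c) / (Nat.factorial j : ℝ) * y ^ j)
      with hCdef
    have hshift : (fun j : ℕ => C (j + 1)) = fun j : ℕ =>
        (Real.Gamma ((j:ℝ) + (c + 1)) / (Nat.factorial j : ℝ) * y ^ j) * y := by
      funext j
      simp only [hCdef]
      have hfac : ((Nat.factorial (j + 1) : ℕ) : ℝ) = ((j:ℝ) + 1) * (Nat.factorial j : ℝ) := by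
        rw [Nat.factorial_succ]; push_cast; ring
      have harg : (((j + 1 : ℕ)) : ℝ) + c = (j:ℝ) + (c + 1) := by push_cast; ring
      rw [harg, hfac]
      have hj1 : ((j:ℝ) + 1) ≠ 0 := by positivity
      push_cast
      field_simp
      ring
    have hC1 : HasSum (fun j : ℕ => C (j + 1)) (T * y) := by
      rw [hshift]; exact hB.mul_right y
    have hC : HasSum C (T * y) := by
      have h2 := (hasSum_nat_add_iff (f := C) 1).mp hC1
      simpa [hCdef] using h2
    have hBC : HasSum (fun j : ℕ =>
        Real.Gamma ((j:ℝ) + (c + 1)) / (Nat.factorial j : ℝ) * y ^ j - C j) (T - T * y) :=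
      hB.sub hC
    have hid : ∀ j : ℕ, Real.Gamma ((j:ℝ) + (c + 1)) / (Nat.factorial j : ℝ) * y ^ j - C j
        = c * (Real.Gamma ((j:ℝ) + c) / (Nat.factorial j : ℝ) * y ^ j) := by
      intro j
      have hjc : ((j:ℝ) + c) ≠ 0 := by
        rcases Nat.eq_zero_or_pos j with rfl | hj
        · simpa using ne_of_lt hneg
        · have h3 : (1:ℝ) ≤ (j:ℝ) := by exact_mod_cast hj
          have : (0:ℝ) < (j:ℝ) + c := by linarith
          exact ne_of_gt this
      have hG : Real.Gamma ((j:ℝ) + (c + 1)) = ((j:ℝ) + c) * Real.Gamma ((j:ℝ) + c) := by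
        rw [show (j:ℝ) + (c + 1) = ((j:ℝ) + c) + 1 by ring, Real.Gamma_add_one hjc]
      simp only [hCdef]
      rw [hG]
      ring
    rw [funext hid] at hBC
    have hF : HasSum (fun j : ℕ => Real.Gamma ((j:ℝ) + c) / (Nat.factorial j : ℝ) * y ^ j)
        (c⁻¹ * (T - T * y)) := by
      have h2 := hBC.mul_left c⁻¹
      have h3 : (fun j : ℕ => c⁻¹ * (c * (Real.Gamma ((j:ℝ) + c) / (Nat.factorial j : ℝ) * y ^ j)))
          = fun j : ℕ => Real.Gamma ((j:ℝ) + c) / (Nat.factorial j : ℝ) * y ^ j := by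
        funext j
        rw [← mul_assoc, inv_mul_cancel₀ (ne_of_lt hneg), one_mul]
      rw [h3] at h2
      exact h2
    exact ⟨c⁻¹ * (T - T * y), hF, by
      have : T - T * y = T * (1 - y) := by ring
      rw [this]
      exact mul_ne_zero (inv_ne_zero (ne_of_lt hneg)) (mul_ne_zero hTne (ne_of_gt h1y))⟩
  · -- c = 0 : logarithm
    subst hzero
    have h0' := Real.hasSum_pow_div_log_of_abs_lt_one hy
    set F : ℕ → ℝ := fun j => Real.Gamma ((j:ℝ) + 0) / (Nat.factorial j : ℝ) * y ^ j with hFd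
    have hshift : (fun n : ℕ => F (n + 1)) = fun n : ℕ => y ^ (n + 1) / ((n : ℝ) + 1) := by
      funext n
      simp only [hFd]
      rw [show (((n + 1 : ℕ)):ℝ) + 0 = ((n:ℕ):ℝ) + 1 by push_cast; ring,
        Real.Gamma_nat_eq_factorial, Nat.factorial_succ]
      push_cast
      have : ((n:ℝ) + 1) ≠ 0 := by positivity
      field_simp
    have hs1 : HasSum (fun n : ℕ => F (n + 1)) (-Real.log (1 - y)) := by
      rw [hshift]
      exact h0'
    have hs2 : HasSum F (-Real.log (1 - y)) := by
      have h2 := (hasSum_nat_add_iff (f := F) 1).mp hs1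
      simpa [hFd, Real.Gamma_zero] using h2
    refine ⟨-Real.log (1 - y), hs2, ?_⟩
    rw [neg_ne_zero]
    intro h
    rcases Real.log_eq_zero.mp h with h' | h' | h' <;> [linarith; exact h0 (by linarith); linarith]
  · exact ⟨(1 / (1 - y)) ^ c * Real.Gamma c, hasSum_pos_c hpos h0 hy, by
      have h1 := Real.rpow_pos_of_pos (by positivity : (0:ℝ) < 1 / (1 - y)) c
      have h2 := Real.Gamma_pos_of_pos hpos
      positivity⟩

noncomputable def Vbar (N : ℕ) (α a x : ℝ) : ℝ :=
  Real.Gamma α * Real.Gamma (1 - α) / (((N : ℝ) + α)⁻¹ * Real.Gamma ((N : ℝ) + α)) *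
    ∑' k : ℕ, (if N ≤ k then
      Real.Gamma ((k : ℝ) + a) / Real.Gamma ((k : ℝ) + 1 - ((N : ℝ) + α)) else 0) * x ^ k

noncomputable def vterm (N : ℕ) (a x α : ℝ) (k : ℕ) : ℝ :=
  (if N ≤ k then
    Real.Gamma ((k : ℝ) + a) / Real.Gamma ((k : ℝ) + 1 - ((N : ℝ) + α)) else 0) * x ^ k

lemma vbar_eq (N : ℕ) (α a x : ℝ) : Vbar N α a x =
    Real.Gamma α * Real.Gamma (1 - α) / (((N : ℝ) + α)⁻¹ * Real.Gamma ((N : ℝ) + α)) *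
      ∑' k : ℕ, vterm N a x α k := rfl

noncomputable def vbound (N : ℕ) (a x : ℝ) (k : ℕ) : ℝ :=
  if k < N + (⌈|a|⌉₊ + 2) then 6 * |Real.Gamma ((k:ℝ) + a)| * |x| ^ k
  else ((k:ℝ) + ((⌈|a|⌉₊ + 2 : ℕ) : ℝ)) ^ ((⌈|a|⌉₊ + 2) + N) * |x| ^ k

lemma vbound_summable (N : ℕ) (a : ℝ) {x : ℝ} (h0 : x ≠ 0) (h1 : |x| < 1) :
    Summable (vbound N a x) := by
  set m : ℕ := ⌈|a|⌉₊ + 2 with hm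
  set K : ℕ := N + m with hK
  have hw : Summable (fun k : ℕ => ((k:ℝ) + (m:ℝ)) ^ (m + N) * |x| ^ k) :=
    summable_shift m (m + N) h0 h1
  apply (summable_nat_add_iff K).mp
  apply (((summable_nat_add_iff K).mpr hw)).congr
  intro n
  simp only [vbound, ← hm, ← hK]
  rw [if_neg (by omega)]

lemma vterm_le (N : ℕ) (hN : 1 ≤ N) (a x : ℝ) :
    ∀ α ∈ Set.Ioo (0:ℝ) 1, ∀ k, ‖vterm N a x α k‖ ≤ vbound N a x k := by
  set q : ℕ := ⌈|a|⌉₊ with hq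
  set m : ℕ := q + 2 with hm
  set K : ℕ := N + m with hK
  have hqa : |a| ≤ (q:ℝ) := Nat.le_ceil |a|
  rintro α ⟨hα0, hα1⟩ k
  have hbound_nonneg : 0 ≤ vbound N a x k := by
    simp only [vbound, ← hq, ← hm, ← hK]
    split <;> positivity
  by_cases hNk : N ≤ k
  swap
  · simp only [vterm, if_neg hNk]
    simpa using hbound_nonneg
  have hNkR : (N:ℝ) ≤ (k:ℝ) := Nat.cast_le.mpr hNk
  have htk : 0 < (k:ℝ) + 1 - ((N:ℝ) + α) := by linarith
  have hΓt : 0 < Real.Gamma ((k:ℝ) + 1 - ((N:ℝ) + α)) := Real.Gamma_pos_of_pos htk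
  have hnorm : ‖vterm N a x α k‖
      = |Real.Gamma ((k:ℝ) + a)| / Real.Gamma ((k:ℝ) + 1 - ((N:ℝ) + α)) * |x| ^ k := by
    simp only [vterm, if_pos hNk]
    rw [Real.norm_eq_abs, abs_mul, abs_pow, abs_div, abs_of_pos hΓt]
  rw [hnorm]
  by_cases hkK : k < K
  · simp only [vbound, ← hq, ← hm, ← hK]
    rw [if_pos hkK]
    have h6 := gamma_lb htk
    have hr : |Real.Gamma ((k:ℝ) + a)| / Real.Gamma ((k:ℝ) + 1 - ((N:ℝ) + α))
        ≤ 6 * |Real.Gamma ((k:ℝ) + a)| := by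
      rw [div_le_iff₀ hΓt]
      calc |Real.Gamma ((k:ℝ) + a)| = 6 * |Real.Gamma ((k:ℝ) + a)| * 6⁻¹ := by ring
        _ ≤ 6 * |Real.Gamma ((k:ℝ) + a)| * Real.Gamma ((k:ℝ) + 1 - ((N:ℝ) + α)) :=
            mul_le_mul_of_nonneg_left h6 (by positivity)
    exact mul_le_mul_of_nonneg_right hr (by positivity)
  · simp only [vbound, ← hq, ← hm, ← hK]
    rw [if_neg hkK]
    push_neg at hkK
    obtain ⟨n, hn⟩ : ∃ n, N = n + 1 := ⟨N - 1, by omega⟩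
    obtain ⟨r, hr⟩ : ∃ r, k = K + r := ⟨k - K, by omega⟩
    have hKR : ((K:ℕ):ℝ) ≤ (k:ℝ) := Nat.cast_le.mpr hkK
    have hKval : (K:ℝ) = (N:ℝ) + (q:ℝ) + 2 := by rw [hK, hm]; push_cast; ring
    have hNR : (1:ℝ) ≤ (N:ℝ) := by exact_mod_cast hN
    have hmR : ((m:ℕ):ℝ) = (q:ℝ) + 2 := by rw [hm]; push_cast; ring
    -- numerator bound
    have hka : (2:ℝ) ≤ (k:ℝ) + a := by
      have := neg_abs_le a
      rw [hKval] at hKR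
      linarith
    have hkam : (k:ℝ) + a ≤ (k:ℝ) + (m:ℝ) := by
      have : a ≤ |a| := le_abs_self a
      rw [hmR]; linarith
    have hmono := Real.Gamma_strictMonoOn_Ici.monotoneOn
    have hnum : Real.Gamma ((k:ℝ) + a) ≤ Real.Gamma ((k:ℝ) + (m:ℝ)) :=
      hmono (Set.mem_Ici.mpr hka) (Set.mem_Ici.mpr (by linarith)) hkam
    have hnum_pos : 0 < Real.Gamma ((k:ℝ) + a) := Real.Gamma_pos_of_pos (by linarith)
    -- denominator bound
    have hkN2 : (2:ℝ) ≤ (k:ℝ) - (N:ℝ) := by rw [hKval] at hKR; linarith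
    have hden : Real.Gamma ((k:ℝ) - (N:ℝ)) ≤ Real.Gamma ((k:ℝ) + 1 - ((N:ℝ) + α)) :=
      hmono (Set.mem_Ici.mpr hkN2) (Set.mem_Ici.mpr (by linarith)) (by linarith)
    have hden_pos : 0 < Real.Gamma ((k:ℝ) - (N:ℝ)) := Real.Gamma_pos_of_pos (by linarith)
    -- ratio of Gammas via factorials
    have hfac1 : Real.Gamma ((k:ℝ) + (m:ℝ)) = (Nat.factorial (n + 2*q + 4 + r) : ℝ) := by
      have e1 : (k:ℝ) + (m:ℝ) = ((n + 2*q + 4 + r : ℕ):ℝ) + 1 := by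
        rw [show k = K + r from hr, hK, hm, hn]
        push_cast; ring
      rw [e1, Real.Gamma_nat_eq_factorial]
    have hfac2 : Real.Gamma ((k:ℝ) - (N:ℝ)) = (Nat.factorial (q + 1 + r) : ℝ) := by
      have e2 : (k:ℝ) - (N:ℝ) = ((q + 1 + r : ℕ):ℝ) + 1 := by
        rw [show k = K + r from hr, hK, hm, hn]
        push_cast; ring
      rw [e2, Real.Gamma_nat_eq_factorial]
    have hnat : Nat.factorial (n + 2*q + 4 + r)
        ≤ Nat.factorial (q + 1 + r) * (n + 2*q + 4 + r) ^ (m + N) := by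
      have h1 := fact_le_pow_mul (q + 1 + r) (m + N)
      have e3 : q + 1 + r + (m + N) = n + 2*q + 4 + r := by omega
      rw [e3] at h1
      exact h1
    have hbase : ((n + 2*q + 4 + r : ℕ):ℝ) ≤ (k:ℝ) + (m:ℝ) := by
      rw [show k = K + r from hr, hK, hm, hn]; push_cast; linarith
    have hratio : Real.Gamma ((k:ℝ) + (m:ℝ)) / Real.Gamma ((k:ℝ) - (N:ℝ))
        ≤ ((k:ℝ) + (m:ℝ)) ^ (m + N) := by
      rw [div_le_iff₀ hden_pos, hfac1, hfac2]
      calc (Nat.factorial (n + 2*q + 4 + r) : ℝ)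
          ≤ (Nat.factorial (q + 1 + r) : ℝ) * ((n + 2*q + 4 + r : ℕ):ℝ) ^ (m + N) := by
            exact_mod_cast Nat.cast_le.mpr hnat
        _ ≤ (Nat.factorial (q + 1 + r) : ℝ) * ((k:ℝ) + (m:ℝ)) ^ (m + N) := by
            apply mul_le_mul_of_nonneg_left _ (by positivity)
            exact pow_le_pow_left₀ (by positivity) hbase _
        _ = ((k:ℝ) + (m:ℝ)) ^ (m + N) * (Nat.factorial (q + 1 + r) : ℝ) := by ring
    have habs : |Real.Gamma ((k:ℝ) + a)| = Real.Gamma ((k:ℝ) + a) := abs_of_pos hnum_pos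
    rw [habs]
    apply mul_le_mul_of_nonneg_right _ (by positivity)
    calc Real.Gamma ((k:ℝ) + a) / Real.Gamma ((k:ℝ) + 1 - ((N:ℝ) + α))
        ≤ Real.Gamma ((k:ℝ) + (m:ℝ)) / Real.Gamma ((k:ℝ) - (N:ℝ)) :=
          div_le_div₀ (le_of_lt (Real.Gamma_pos_of_pos (by linarith))) hnum hden_pos hden
      _ ≤ ((k:ℝ) + (m:ℝ)) ^ (m + N) := hratio

lemma vterm_tendsto (N : ℕ) (a x t : ℝ) (k : ℕ)
    (hk : N ≤ k → 0 < (k:ℝ) + 1 - ((N:ℝ) + t)) :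
    Tendsto (fun α => vterm N a x α k) (𝓝[Set.Ioo (0:ℝ) 1] t) (𝓝 (vterm N a x t k)) := by
  by_cases hNk : N ≤ k
  · simp only [vterm, if_pos hNk]
    apply Tendsto.mul_const
    refine Tendsto.div tendsto_const_nhds ?_ (ne_of_gt (Real.Gamma_pos_of_pos (hk hNk)))
    apply Tendsto.mono_left _ nhdsWithin_le_nhds
    exact (gamma_cont (hk hNk)).tendsto.comp
      ((continuous_const.sub (continuous_const.add continuous_id)).tendsto t)
  · simp only [vterm, if_neg hNk]
    exact tendsto_const_nhds

theorem stmt19 (N : ℕ) (hN : 1 ≤ N) (a : ℝ) (ha : -2 < a)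
    (x : ℝ) (hx0 : 0 < |x|) (hx1 : |x| < 1) :
    Tendsto (fun α : ℝ => |Vbar N α a x|) (nhdsWithin 0 (Set.Ioo (0 : ℝ) 1)) atTop ∧
    Tendsto (fun α : ℝ => |Vbar N α a x|) (nhdsWithin 1 (Set.Ioo (0 : ℝ) 1)) atTop := by
  have hx : x ≠ 0 := by
    intro h; rw [h, abs_zero] at hx0; exact lt_irrefl 0 hx0
  have hNR : (1:ℝ) ≤ (N:ℝ) := by exact_mod_cast hN
  have hsum_bound := vbound_summable N a hx hx1
  have hdom : ∀ t : ℝ, ∀ᶠ α in 𝓝[Set.Ioo (0:ℝ) 1] t, ∀ k, ‖vterm N a x α k‖ ≤ vbound N a x k :=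
    fun t => Filter.eventually_of_mem self_mem_nhdsWithin (vterm_le N hN a x)
  constructor
  · -- α → 0⁺
    have hab0 : ∀ k, Tendsto (fun α => vterm N a x α k) (𝓝[Set.Ioo (0:ℝ) 1] 0)
        (𝓝 (vterm N a x 0 k)) := by
      intro k
      apply vterm_tendsto
      intro hNk
      have : (N:ℝ) ≤ (k:ℝ) := Nat.cast_le.mpr hNk
      linarith
    have hT0 : Tendsto (fun α => ∑' k, vterm N a x α k) (𝓝[Set.Ioo (0:ℝ) 1] 0)
        (𝓝 (∑' k, vterm N a x 0 k)) :=
      tendsto_tsum_of_dominated_convergence hsum_bound hab0 (hdom 0)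
    have hc0 : (-1:ℝ) < (N:ℝ) + a := by linarith
    obtain ⟨S0, hS0, hS0ne⟩ := hasSum_ne_zero hc0 hx hx1
    have hshift0 : ∀ j : ℕ, vterm N a x 0 (j + N)
        = (Real.Gamma ((j:ℝ) + ((N:ℝ) + a)) / (Nat.factorial j : ℝ) * x ^ j) * x ^ N := by
      intro j
      simp only [vterm, if_pos (Nat.le_add_left N j)]
      rw [show ((j + N : ℕ):ℝ) + a = (j:ℝ) + ((N:ℝ) + a) by push_cast; ring,
        show ((j + N : ℕ):ℝ) + 1 - ((N:ℝ) + 0) = ((j:ℕ):ℝ) + 1 by push_cast; ring,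
        Real.Gamma_nat_eq_factorial, pow_add]
      ring
    have hL0 : HasSum (fun k => vterm N a x 0 k) (S0 * x ^ N) := by
      have h1 : HasSum (fun j => vterm N a x 0 (j + N)) (S0 * x ^ N) := by
        rw [funext hshift0]; exact hS0.mul_right _
      have h2 := (hasSum_nat_add_iff (f := fun k => vterm N a x 0 k) N).mp h1
      have h3 : ∑ i ∈ Finset.range N, vterm N a x 0 i = 0 :=
        Finset.sum_eq_zero fun i hi => by
          simp [vterm, if_neg (Nat.not_le.mpr (Finset.mem_range.mp hi))]
      rwa [h3, add_zero] at h2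
    have hL0ne : (∑' k, vterm N a x 0 k) ≠ 0 := by
      rw [hL0.tsum_eq]; exact mul_ne_zero hS0ne (pow_ne_zero _ hx)
    have hNpos : (0:ℝ) < (N:ℝ) + 0 := by linarith
    have hDen : Tendsto (fun α : ℝ => ((N:ℝ) + α)⁻¹ * Real.Gamma ((N:ℝ) + α)) (𝓝 (0:ℝ))
        (𝓝 (((N:ℝ) + 0)⁻¹ * Real.Gamma ((N:ℝ) + 0))) := by
      apply Tendsto.mul
      · exact ((continuous_const.add continuous_id).tendsto 0).inv₀ (ne_of_gt hNpos)
      · exact (gamma_cont hNpos).tendsto.comp ((continuous_const.add continuous_id).tendsto 0)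
    have hNum : Tendsto (fun α : ℝ => Real.Gamma (1 - α)) (𝓝 (0:ℝ))
        (𝓝 (Real.Gamma (1 - 0))) :=
      (gamma_cont (by norm_num)).tendsto.comp ((continuous_const.sub continuous_id).tendsto 0)
    have hDpos : 0 < ((N:ℝ) + 0)⁻¹ * Real.Gamma ((N:ℝ) + 0) :=
      mul_pos (inv_pos.mpr hNpos) (Real.Gamma_pos_of_pos hNpos)
    have hQpos : 0 < Real.Gamma (1 - 0) / (((N:ℝ) + 0)⁻¹ * Real.Gamma ((N:ℝ) + 0)) :=
      div_pos (Real.Gamma_pos_of_pos (by norm_num)) hDpos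
    have hQ0 : Tendsto (fun α : ℝ =>
        Real.Gamma (1 - α) / (((N:ℝ) + α)⁻¹ * Real.Gamma ((N:ℝ) + α)))
        (𝓝[Set.Ioo (0:ℝ) 1] 0)
        (𝓝 (Real.Gamma (1 - 0) / (((N:ℝ) + 0)⁻¹ * Real.Gamma ((N:ℝ) + 0)))) :=
      Tendsto.mono_left (hNum.div hDen (ne_of_gt hDpos)) nhdsWithin_le_nhds
    have hGtop0 : Tendsto Real.Gamma (𝓝[Set.Ioo (0:ℝ) 1] (0:ℝ)) atTop :=
      gamma_top.mono_left (nhdsWithin_mono 0 Set.Ioo_subset_Ioi_self)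
    have hP0 : Tendsto (fun α : ℝ => Real.Gamma α * Real.Gamma (1 - α) /
        (((N:ℝ) + α)⁻¹ * Real.Gamma ((N:ℝ) + α))) (𝓝[Set.Ioo (0:ℝ) 1] 0) atTop :=
      (Tendsto.atTop_mul_pos hQpos hGtop0 hQ0).congr (fun α => (mul_div_assoc _ _ _).symm)
    have final0 := Tendsto.atTop_mul_pos (abs_pos.mpr hL0ne)
      (tendsto_abs_atTop_atTop.comp hP0) hT0.abs
    apply final0.congr
    intro α
    rw [vbar_eq, abs_mul]
    rfl
  · -- α → 1⁻
    have hmap : Tendsto (fun α : ℝ => 1 - α) (𝓝[Set.Ioo (0:ℝ) 1] 1) (𝓝[>] (0:ℝ)) := by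
      rw [tendsto_nhdsWithin_iff]
      constructor
      · apply Tendsto.mono_left _ nhdsWithin_le_nhds
        have h : Tendsto (fun α : ℝ => 1 - α) (𝓝 1) (𝓝 (1 - 1)) :=
          (continuous_const.sub continuous_id).tendsto 1
        simpa using h
      · filter_upwards [self_mem_nhdsWithin] with α hα
        exact Set.mem_Ioi.mpr (sub_pos.mpr hα.2)
    have hGtop1 : Tendsto (fun α : ℝ => Real.Gamma (1 - α)) (𝓝[Set.Ioo (0:ℝ) 1] 1) atTop :=
      gamma_top.comp hmap
    have hv1N : vterm N a x 1 N = 0 := by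
      simp only [vterm, if_pos (le_refl N)]
      rw [show ((N:ℕ):ℝ) + 1 - ((N:ℝ) + 1) = 0 by ring, Real.Gamma_zero, div_zero, zero_mul]
    have hab1 : ∀ k, Tendsto (fun α => vterm N a x α k) (𝓝[Set.Ioo (0:ℝ) 1] 1)
        (𝓝 (vterm N a x 1 k)) := by
      intro k
      by_cases hkN : k = N
      · subst hkN
        rw [hv1N]
        have hdiv : Tendsto (fun α : ℝ => Real.Gamma ((k:ℝ) + a) / Real.Gamma (1 - α))
            (𝓝[Set.Ioo (0:ℝ) 1] 1) (𝓝 0) :=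
          Tendsto.div_atTop tendsto_const_nhds hGtop1
        have h2 := hdiv.mul_const (x ^ k)
        rw [zero_mul] at h2
        apply h2.congr
        intro α
        simp only [vterm, if_pos (le_refl k)]
        rw [show ((k:ℕ):ℝ) + 1 - ((k:ℝ) + α) = 1 - α by ring]
      · apply vterm_tendsto
        intro hNk
        have h3 : N + 1 ≤ k := by omega
        have h4 : ((N:ℝ)) + 1 ≤ (k:ℝ) := by exact_mod_cast h3
        linarith
    have hT1 : Tendsto (fun α => ∑' k, vterm N a x α k) (𝓝[Set.Ioo (0:ℝ) 1] 1)
        (𝓝 (∑' k, vterm N a x 1 k)) :=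
      tendsto_tsum_of_dominated_convergence hsum_bound hab1 (hdom 1)
    have hc1 : (-1:ℝ) < (N:ℝ) + 1 + a := by linarith
    obtain ⟨S1, hS1, hS1ne⟩ := hasSum_ne_zero hc1 hx hx1
    have hshift1 : ∀ j : ℕ, vterm N a x 1 (j + (N + 1))
        = (Real.Gamma ((j:ℝ) + ((N:ℝ) + 1 + a)) / (Nat.factorial j : ℝ) * x ^ j)
          * x ^ (N + 1) := by
      intro j
      simp only [vterm, if_pos (by omega : N ≤ j + (N + 1))]
      rw [show ((j + (N + 1) : ℕ):ℝ) + a = (j:ℝ) + ((N:ℝ) + 1 + a) by push_cast; ring,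
        show ((j + (N + 1) : ℕ):ℝ) + 1 - ((N:ℝ) + 1) = ((j:ℕ):ℝ) + 1 by push_cast; ring,
        Real.Gamma_nat_eq_factorial, pow_add]
      ring
    have hL1 : HasSum (fun k => vterm N a x 1 k) (S1 * x ^ (N + 1)) := by
      have h1 : HasSum (fun j => vterm N a x 1 (j + (N + 1))) (S1 * x ^ (N + 1)) := by
        rw [funext hshift1]; exact hS1.mul_right _
      have h2 := (hasSum_nat_add_iff (f := fun k => vterm N a x 1 k) (N + 1)).mp h1
      have h3 : ∑ i ∈ Finset.range (N + 1), vterm N a x 1 i = 0 := by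
        rw [Finset.sum_range_succ, hv1N, add_zero]
        exact Finset.sum_eq_zero fun i hi => by
          simp [vterm, if_neg (Nat.not_le.mpr (Finset.mem_range.mp hi))]
      rwa [h3, add_zero] at h2
    have hL1ne : (∑' k, vterm N a x 1 k) ≠ 0 := by
      rw [hL1.tsum_eq]; exact mul_ne_zero hS1ne (pow_ne_zero _ hx)
    have hN1pos : (0:ℝ) < (N:ℝ) + 1 := by linarith
    have hDen1 : Tendsto (fun α : ℝ => ((N:ℝ) + α)⁻¹ * Real.Gamma ((N:ℝ) + α)) (𝓝 (1:ℝ))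
        (𝓝 (((N:ℝ) + 1)⁻¹ * Real.Gamma ((N:ℝ) + 1))) := by
      apply Tendsto.mul
      · exact ((continuous_const.add continuous_id).tendsto 1).inv₀ (ne_of_gt hN1pos)
      · exact (gamma_cont hN1pos).tendsto.comp ((continuous_const.add continuous_id).tendsto 1)
    have hNum1 : Tendsto (fun α : ℝ => Real.Gamma α) (𝓝 (1:ℝ)) (𝓝 (Real.Gamma 1)) :=
      (gamma_cont one_pos).tendsto
    have hDpos1 : 0 < ((N:ℝ) + 1)⁻¹ * Real.Gamma ((N:ℝ) + 1) :=
      mul_pos (inv_pos.mpr hN1pos) (Real.Gamma_pos_of_pos hN1pos)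
    have hQpos1 : 0 < Real.Gamma 1 / (((N:ℝ) + 1)⁻¹ * Real.Gamma ((N:ℝ) + 1)) :=
      div_pos (Real.Gamma_pos_of_pos one_pos) hDpos1
    have hQ1 : Tendsto (fun α : ℝ =>
        Real.Gamma α / (((N:ℝ) + α)⁻¹ * Real.Gamma ((N:ℝ) + α)))
        (𝓝[Set.Ioo (0:ℝ) 1] 1)
        (𝓝 (Real.Gamma 1 / (((N:ℝ) + 1)⁻¹ * Real.Gamma ((N:ℝ) + 1)))) :=
      Tendsto.mono_left (hNum1.div hDen1 (ne_of_gt hDpos1)) nhdsWithin_le_nhds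
    have hP1 : Tendsto (fun α : ℝ => Real.Gamma α * Real.Gamma (1 - α) /
        (((N:ℝ) + α)⁻¹ * Real.Gamma ((N:ℝ) + α))) (𝓝[Set.Ioo (0:ℝ) 1] 1) atTop :=
      (Tendsto.atTop_mul_pos hQpos1 hGtop1 hQ1).congr (fun α => by ring)
    have final1 := Tendsto.atTop_mul_pos (abs_pos.mpr hL1ne)
      (tendsto_abs_atTop_atTop.comp hP1) hT1.abs
    apply final1.congr
    intro α
    rw [vbar_eq, abs_mul]
    rfl
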